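/- Let θ > 0 and X ~ Poisson(θ). For every λ ∈ (0, 1/2), log E[exp(λ(√X − E√X))] ≤ λ(e^λ − 1)·θ·E[1/(4X+1)] ≤ λ(e^λ − 1). In particular √X − E[√X] is sub-exponential with norm bounded by an absolute constant. -/

import Mathlib

open MeasureTheory Real Filter

set_option linter.unusedVariables false
set_option linter.unusedSectionVars false
set_option linter.unusedTactic false
set_option linter.unreachableTactic false
set_option linter.unnecessarySeqFocus false
set_option maxHeartbeats 1000000

noncomputable def pp (θ : ℝ) (k : ℕ) : ℝ := Real.exp (-θ) * θ ^ k / (Nat.factorial k)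

lemma pp_nonneg {θ : ℝ} (hθ : 0 < θ) (k : ℕ) : 0 ≤ pp θ k := by
  unfold pp; positivity

lemma pp_succ {θ : ℝ} (k : ℕ) : pp θ (k+1) = θ / (k+1) * pp θ k := by
  unfold pp
  rw [Nat.factorial_succ]
  push_cast
  field_simp
  ring

lemma tsum_exp_series (x : ℝ) : ∑' n : ℕ, x ^ n / (Nat.factorial n) = Real.exp x := by
  rw [Real.exp_eq_exp_ℝ, NormedSpace.exp_eq_tsum_div]

lemma summable_pp {θ : ℝ} (hθ : 0 < θ) : Summable (pp θ) := by
  unfold pp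
  simpa [mul_div_assoc] using (Real.summable_pow_div_factorial θ).mul_left (Real.exp (-θ))

lemma tsum_pp {θ : ℝ} (hθ : 0 < θ) : ∑' k, pp θ k = 1 := by
  unfold pp
  rw [show (fun k : ℕ => Real.exp (-θ) * θ ^ k / (Nat.factorial k))
      = (fun k : ℕ => Real.exp (-θ) * (θ ^ k / (Nat.factorial k))) by funext k; ring]
  rw [tsum_mul_left, tsum_exp_series, ← Real.exp_add]
  simp

/-- monotonicity from derivative -/
lemma mono_aux {f f' : ℝ → ℝ} {a b : ℝ} (hab : a ≤ b)
    (hf : ∀ x ∈ Set.Icc a b, HasDerivAt f (f' x) x)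
    (h0 : ∀ x ∈ Set.Icc a b, 0 ≤ f' x) : f a ≤ f b := by
  have hmono : MonotoneOn f (Set.Icc a b) := by
    apply monotoneOn_of_deriv_nonneg (convex_Icc a b)
    · exact fun x hx => (hf x hx).continuousAt.continuousWithinAt
    · intro x hx
      rw [interior_Icc] at hx
      exact (hf x ⟨le_of_lt hx.1, le_of_lt hx.2⟩).differentiableAt.differentiableWithinAt
    · intro x hx
      rw [interior_Icc] at hx
      rw [(hf x ⟨le_of_lt hx.1, le_of_lt hx.2⟩).deriv]
      exact h0 x ⟨le_of_lt hx.1, le_of_lt hx.2⟩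
  exact hmono (Set.left_mem_Icc.2 hab) (Set.right_mem_Icc.2 hab) hab

lemma exp_convex_bound {d : ℝ} (s : ℝ) (hd0 : 0 ≤ d) (hd1 : d ≤ 1) :
    Real.exp (s * d) ≤ 1 + d * (Real.exp s - 1) := by
  have := convexOn_exp.2 (Set.mem_univ 0) (Set.mem_univ s) (by linarith : (0:ℝ) ≤ 1 - d) hd0 (by ring)
  simp only [smul_eq_mul, mul_zero, zero_add, Real.exp_zero] at this
  calc Real.exp (s * d) = Real.exp (d * s) := by rw [mul_comm]
    _ ≤ (1-d) * 1 + d * Real.exp s := this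
    _ = 1 + d * (Real.exp s - 1) := by ring

lemma E1 {d : ℝ} {s : ℝ} (hd0 : 0 ≤ d) (hd1 : d ≤ 1) (hs : 0 ≤ s) :
    Real.exp (s * d) ≤ 1 + s * d + (Real.exp s - 1 - s) * d ^ 2 := by
  have key : ∀ x ∈ Set.Icc 0 s,
      0 ≤ d + (Real.exp x - 1) * d ^ 2 - d * Real.exp (x * d) := by
    intro x hx
    have h1 := exp_convex_bound x hd0 hd1
    nlinarith [hd0, sq_nonneg d]
  have hder : ∀ x ∈ Set.Icc 0 s,
      HasDerivAt (fun y => 1 + y * d + (Real.exp y - 1 - y) * d ^ 2 - Real.exp (y * d))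
        (d + (Real.exp x - 1) * d ^ 2 - d * Real.exp (x * d)) x := by
    intro x _
    have h1 : HasDerivAt (fun y : ℝ => y * d) d x := by
      simpa using (hasDerivAt_id x).mul_const d
    have h2 : HasDerivAt (fun y => Real.exp (y * d)) (d * Real.exp (x * d)) x := by
      simpa [mul_comm, Function.comp_def] using (Real.hasDerivAt_exp (x*d)).comp x h1
    have h3 : HasDerivAt (fun y => (Real.exp y - 1 - y) * d ^ 2)
        ((Real.exp x - 1) * d ^ 2) x := by
      have : HasDerivAt (fun y => Real.exp y - 1 - y) (Real.exp x - 1) x :=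
        ((Real.hasDerivAt_exp x).sub_const 1).sub (hasDerivAt_id x)
      simpa using this.mul_const (d^2)
    have := ((hasDerivAt_const x (1:ℝ)).add h1).add h3 |>.sub h2
    refine this.congr_deriv ?_
    ring
  have := mono_aux hs hder key
  simp only [mul_zero, zero_mul, Real.exp_zero] at this
  linarith

lemma scalar_final {s : ℝ} (hs : 0 ≤ s) :
    Real.exp s - 1 - s + s ^ 2 / 2 ≤ s * (Real.exp s - 1) := by
  have hder : ∀ x ∈ Set.Icc 0 s,
      HasDerivAt (fun y => y * (Real.exp y - 1) - (Real.exp y - 1 - y + y ^ 2 / 2))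
        (x * Real.exp x - x) x := by
    intro x _
    have h1 : HasDerivAt (fun y => y * (Real.exp y - 1))
        (1 * (Real.exp x - 1) + x * Real.exp x) x :=
      (hasDerivAt_id x).mul ((Real.hasDerivAt_exp x).sub_const 1)
    have h2 : HasDerivAt (fun y => Real.exp y - 1 - y + y ^ 2 / 2)
        (Real.exp x - 1 + x) x := by
      have ha : HasDerivAt (fun y : ℝ => y ^ 2 / 2) x x := by
        simpa using (hasDerivAt_pow 2 x).div_const 2
      have := (((Real.hasDerivAt_exp x).sub_const 1).sub (hasDerivAt_id x)).add ha
      exact this.congr_deriv (by ring)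
    have := h1.sub h2
    exact this.congr_deriv (by ring)
  have hpos : ∀ x ∈ Set.Icc 0 s, 0 ≤ x * Real.exp x - x := by
    intro x hx
    have h1 : 1 ≤ Real.exp x := Real.one_le_exp hx.1
    nlinarith [hx.1]
  have := mono_aux hs hder hpos
  simp only [zero_mul, Real.exp_zero] at this
  linarith

-- facts about x = √j, y = √(j+1)
lemma sqrt_facts (j : ℕ) :
    0 ≤ Real.sqrt (j:ℝ) ∧ Real.sqrt (j:ℝ) ≤ Real.sqrt ((j:ℝ)+1) ∧
    (Real.sqrt (j:ℝ))^2 = (j:ℝ) ∧ (Real.sqrt ((j:ℝ)+1))^2 = (j:ℝ)+1 ∧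
    (j:ℝ) ≤ Real.sqrt (j:ℝ) * Real.sqrt ((j:ℝ)+1) := by
  have hj : (0:ℝ) ≤ (j:ℝ) := Nat.cast_nonneg j
  have hx : 0 ≤ Real.sqrt (j:ℝ) := Real.sqrt_nonneg _
  have hy : 0 ≤ Real.sqrt ((j:ℝ)+1) := Real.sqrt_nonneg _
  have hx2 : (Real.sqrt (j:ℝ))^2 = (j:ℝ) := Real.sq_sqrt hj
  have hy2 : (Real.sqrt ((j:ℝ)+1))^2 = (j:ℝ)+1 := Real.sq_sqrt (by linarith)
  have hxy : Real.sqrt (j:ℝ) ≤ Real.sqrt ((j:ℝ)+1) := Real.sqrt_le_sqrt (by linarith)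
  refine ⟨hx, hxy, hx2, hy2, ?_⟩
  nlinarith [sq_nonneg (Real.sqrt (j:ℝ) * Real.sqrt ((j:ℝ)+1) - (j:ℝ)),
    mul_nonneg hx hy]

lemma d_nonneg (j : ℕ) : 0 ≤ Real.sqrt ((j:ℝ)+1) - Real.sqrt (j:ℝ) := by
  obtain ⟨hx, hxy, _, _, _⟩ := sqrt_facts j; linarith

lemma d_le_one (j : ℕ) : Real.sqrt ((j:ℝ)+1) - Real.sqrt (j:ℝ) ≤ 1 := by
  obtain ⟨hx, hxy, hx2, hy2, hj⟩ := sqrt_facts j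
  nlinarith

lemma d_sq (j : ℕ) :
    (Real.sqrt ((j:ℝ)+1) - Real.sqrt (j:ℝ))^2 * (4*(j:ℝ)+1) ≤ 1 := by
  obtain ⟨hx, hxy, hx2, hy2, hj⟩ := sqrt_facts j
  have key : (Real.sqrt ((j:ℝ)+1) - Real.sqrt (j:ℝ)) * (Real.sqrt ((j:ℝ)+1) + Real.sqrt (j:ℝ)) = 1 := by
    nlinarith
  nlinarith [sq_nonneg (Real.sqrt ((j:ℝ)+1) - Real.sqrt (j:ℝ))]

lemma d_div (j : ℕ) :
    (Real.sqrt ((j:ℝ)+1) - Real.sqrt (j:ℝ)) * (4*(j:ℝ)+1) ≤ 2 * Real.sqrt ((j:ℝ)+1) := by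
  obtain ⟨hx, hxy, hx2, hy2, hj⟩ := sqrt_facts j
  have key : (Real.sqrt ((j:ℝ)+1) - Real.sqrt (j:ℝ)) * (Real.sqrt ((j:ℝ)+1) + Real.sqrt (j:ℝ)) = 1 := by
    nlinarith
  -- d * (4j+1) ≤ d * 2 * (y+x) * y = 2y
  have hd0 := d_nonneg j
  nlinarith [mul_nonneg hd0 hx]

/-- the key pointwise estimate -/
lemma KP (j : ℕ) {s : ℝ} (hs : 0 ≤ s) :
    Real.exp (s * Real.sqrt ((j:ℝ)+1)) / Real.sqrt ((j:ℝ)+1)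
      ≤ Real.exp (s * Real.sqrt (j:ℝ)) *
        (1 / Real.sqrt ((j:ℝ)+1) + (s + (Real.exp s - 1)) * (1/(4*(j:ℝ)+1))) := by
  set x := Real.sqrt (j:ℝ) with hxdef
  set y := Real.sqrt ((j:ℝ)+1) with hydef
  set d := y - x with hddef
  have hy1 : 1 ≤ y := by
    rw [hydef]
    rw [show (1:ℝ) = Real.sqrt 1 by simp]
    exact Real.sqrt_le_sqrt (by simp [Nat.cast_nonneg])
  have hy0 : 0 < y := by linarith
  have hq0 : (0:ℝ) < 4*(j:ℝ)+1 := by positivity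
  have hd0 := d_nonneg j
  have hd1 := d_le_one j
  have hexp0 : 0 < Real.exp (s * x) := Real.exp_pos _
  -- exp(s y) = exp(s x) * exp (s d)
  have hsplit : Real.exp (s * y) = Real.exp (s * x) * Real.exp (s * d) := by
    rw [← Real.exp_add]; congr 1; rw [hddef]; ring
  rw [hsplit]
  rw [div_le_iff₀ hy0] at *
  have hE := E1 hd0 hd1 hs
  -- goal: exp(sx) * exp(sd) ≤ exp(sx) * (1/y + (s + (e^s-1))/(4j+1)) * y
  have hs2 : 0 ≤ Real.exp s - 1 - s := by nlinarith [Real.add_one_le_exp s]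
  have step : Real.exp (s*d) * (4*(j:ℝ)+1) ≤ (4*(j:ℝ)+1) + (s + (Real.exp s - 1)) * y := by
    have h1 : s * d * (4*(j:ℝ)+1) ≤ s * (2 * y) := by
      have := d_div j
      calc s * d * (4*(j:ℝ)+1) = s * (d * (4*(j:ℝ)+1)) := by ring
        _ ≤ s * (2 * y) := by apply mul_le_mul_of_nonneg_left this hs
    have h2 : (Real.exp s - 1 - s) * d^2 * (4*(j:ℝ)+1) ≤ (Real.exp s - 1 - s) * 1 := by
      have := d_sq j
      calc (Real.exp s - 1 - s) * d^2 * (4*(j:ℝ)+1)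
          = (Real.exp s - 1 - s) * (d^2 * (4*(j:ℝ)+1)) := by ring
        _ ≤ (Real.exp s - 1 - s) * 1 := by apply mul_le_mul_of_nonneg_left this hs2
    have h3 : Real.exp (s*d) * (4*(j:ℝ)+1) ≤ (1 + s*d + (Real.exp s - 1 - s)*d^2) * (4*(j:ℝ)+1) := by
      apply mul_le_mul_of_nonneg_right hE (le_of_lt hq0)
    -- (e^s -1-s) ≤ (e^s-1-s) * y  since y ≥ 1
    have h4 : (Real.exp s - 1 - s) * 1 ≤ (Real.exp s - 1 - s) * y :=
      mul_le_mul_of_nonneg_left hy1 hs2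
    nlinarith
  calc Real.exp (s*x) * Real.exp (s*d)
      = Real.exp (s*x) * (Real.exp (s*d) * (4*(j:ℝ)+1)) / (4*(j:ℝ)+1) := by
        field_simp
    _ ≤ Real.exp (s*x) * ((4*(j:ℝ)+1) + (s + (Real.exp s - 1)) * y) / (4*(j:ℝ)+1) := by
        gcongr
    _ = Real.exp (s*x) * (1 / y + (s + (Real.exp s - 1)) * (1/(4*(j:ℝ)+1))) * y := by
        field_simp

set_option maxHeartbeats 1000000 in

/-- Chebyshev association inequality: monotone × antitone decorrelate negatively. -/
lemma cheb (p a b : ℕ → ℝ) (hp : ∀ k, 0 ≤ p k)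
    (hps : Summable p) (hp1 : ∑' k, p k = 1)
    (ha : Monotone a) (hb : Antitone b)
    (ha0 : ∀ k, 0 ≤ a k) (hb0 : ∀ k, 0 ≤ b k)
    (hsa : Summable (fun k => p k * a k)) (hsb : Summable (fun k => p k * b k))
    (hsab : Summable (fun k => p k * (a k * b k))) :
    ∑' k, p k * (a k * b k) ≤ (∑' k, p k * a k) * (∑' k, p k * b k) := by
  -- double sum of p j p k (a j - a k)(b j - b k) ≤ 0
  have hterm : ∀ q : ℕ × ℕ, p q.1 * p q.2 * ((a q.1 - a q.2) * (b q.1 - b q.2)) ≤ 0 := by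
    rintro ⟨j, k⟩
    have : (a j - a k) * (b j - b k) ≤ 0 := by
      rcases le_total j k with h | h
      · have h1 : a j ≤ a k := ha h
        have h2 : b k ≤ b j := hb h
        nlinarith
      · have h1 : a k ≤ a j := ha h
        have h2 : b j ≤ b k := hb h
        nlinarith
    exact mul_nonpos_of_nonneg_of_nonpos (mul_nonneg (hp _) (hp _)) this
  -- summabilities of the four products over pairs
  have s1 : Summable (fun q : ℕ × ℕ => (p q.1 * (a q.1 * b q.1)) * p q.2) :=
    Summable.mul_of_nonneg hsab hps
      (fun k => mul_nonneg (hp k) (mul_nonneg (ha0 k) (hb0 k))) hp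
  have s2 : Summable (fun q : ℕ × ℕ => p q.1 * (p q.2 * (a q.2 * b q.2))) :=
    Summable.mul_of_nonneg hps hsab hp
      (fun k => mul_nonneg (hp k) (mul_nonneg (ha0 k) (hb0 k)))
  have s3 : Summable (fun q : ℕ × ℕ => (p q.1 * a q.1) * (p q.2 * b q.2)) :=
    Summable.mul_of_nonneg hsa hsb (fun k => mul_nonneg (hp k) (ha0 k))
      (fun k => mul_nonneg (hp k) (hb0 k))
  have s4 : Summable (fun q : ℕ × ℕ => (p q.1 * b q.1) * (p q.2 * a q.2)) :=
    Summable.mul_of_nonneg hsb hsa (fun k => mul_nonneg (hp k) (hb0 k))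
      (fun k => mul_nonneg (hp k) (ha0 k))
  -- tsum of products over pairs factorizes
  have fact : ∀ (f g : ℕ → ℝ), Summable f → Summable g →
      (∑' q : ℕ × ℕ, f q.1 * g q.2) = (∑' k, f k) * (∑' k, g k) := by
    intro f g hf hg
    have hfg : Summable (fun q : ℕ × ℕ => f q.1 * g q.2) := by
      apply Summable.of_norm
      have := Summable.mul_of_nonneg hf.abs hg.abs (fun k => abs_nonneg _) (fun k => abs_nonneg _)
      apply this.congr
      intro q
      simp [abs_mul]
    rw [Summable.tsum_prod' hfg (fun j => (hg.mul_left (f j)))]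
    calc ∑' j, ∑' k, f j * g k = ∑' j, f j * ∑' k, g k := by
          congr 1; funext j; exact tsum_mul_left
      _ = (∑' j, f j) * (∑' k, g k) := tsum_mul_right
  -- expand
  have expand : ∀ q : ℕ × ℕ, p q.1 * p q.2 * ((a q.1 - a q.2) * (b q.1 - b q.2))
      = (p q.1 * (a q.1 * b q.1)) * p q.2 + p q.1 * (p q.2 * (a q.2 * b q.2))
        - ((p q.1 * a q.1) * (p q.2 * b q.2) + (p q.1 * b q.1) * (p q.2 * a q.2)) := by
    intro q; ring
  have hsumall : Summable (fun q : ℕ × ℕ => p q.1 * p q.2 * ((a q.1 - a q.2) * (b q.1 - b q.2))) := by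
    apply Summable.congr (((s1.add s2).sub (s3.add s4))) (fun q => (expand q).symm)
  have hle : (∑' q : ℕ × ℕ, p q.1 * p q.2 * ((a q.1 - a q.2) * (b q.1 - b q.2))) ≤ 0 :=
    tsum_nonpos hterm
  have heval : (∑' q : ℕ × ℕ, p q.1 * p q.2 * ((a q.1 - a q.2) * (b q.1 - b q.2)))
      = 2 * (∑' k, p k * (a k * b k)) - 2 * ((∑' k, p k * a k) * (∑' k, p k * b k)) := by
    calc (∑' q : ℕ × ℕ, p q.1 * p q.2 * ((a q.1 - a q.2) * (b q.1 - b q.2)))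
        = (∑' q : ℕ × ℕ, ((p q.1 * (a q.1 * b q.1)) * p q.2 + p q.1 * (p q.2 * (a q.2 * b q.2))
          - ((p q.1 * a q.1) * (p q.2 * b q.2) + (p q.1 * b q.1) * (p q.2 * a q.2)))) := by
          exact tsum_congr expand
      _ = (∑' q : ℕ × ℕ, (p q.1 * (a q.1 * b q.1)) * p q.2)
          + (∑' q : ℕ × ℕ, p q.1 * (p q.2 * (a q.2 * b q.2)))
          - ((∑' q : ℕ × ℕ, (p q.1 * a q.1) * (p q.2 * b q.2))
             + (∑' q : ℕ × ℕ, (p q.1 * b q.1) * (p q.2 * a q.2))) := by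
          rw [Summable.tsum_sub (s1.add s2) (s3.add s4), Summable.tsum_add s1 s2, Summable.tsum_add s3 s4]
      _ = 2 * (∑' k, p k * (a k * b k)) - 2 * ((∑' k, p k * a k) * (∑' k, p k * b k)) := by
          rw [fact _ _ hsab hps, fact _ _ hps hsab, fact _ _ hsa hsb, fact _ _ hsb hsa]
          rw [hp1]
          ring
  rw [heval] at hle
  linarith

section Sums
variable {θ : ℝ} (hθ : 0 < θ)

lemma summable_aux (hθ : 0 < θ) (c : ℝ) :
    Summable (fun k => pp θ k * ((Real.sqrt k + 1) * Real.exp (c * Real.sqrt k))) := by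
  refine Summable.of_nonneg_of_le
    (fun k => by
      have := pp_nonneg hθ k
      positivity)
    (fun k => ?_)
    ((Real.summable_pow_div_factorial (2 * θ * Real.exp |c|)).mul_left
      (2 * Real.exp (-θ) * Real.exp |c|))
  have hsq0 : (0:ℝ) ≤ Real.sqrt k := Real.sqrt_nonneg _
  have hsqk : Real.sqrt (k:ℝ) ≤ (k:ℝ) + 1 := by
    rw [show ((k:ℝ)+1) = Real.sqrt (((k:ℝ)+1)^2) by
      rw [Real.sqrt_sq (by positivity)]]
    apply Real.sqrt_le_sqrt
    nlinarith [Nat.cast_nonneg (α := ℝ) k]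
  have hexp : Real.exp (c * Real.sqrt k) ≤ Real.exp |c| * (Real.exp |c|)^k := by
    calc Real.exp (c * Real.sqrt k) ≤ Real.exp (|c| * ((k:ℝ)+1)) := by
          apply Real.exp_le_exp.2
          calc c * Real.sqrt k ≤ |c| * Real.sqrt k :=
                mul_le_mul_of_nonneg_right (le_abs_self c) hsq0
            _ ≤ |c| * ((k:ℝ)+1) := mul_le_mul_of_nonneg_left hsqk (abs_nonneg c)
      _ = Real.exp |c| * (Real.exp |c|)^k := by
          rw [show |c| * ((k:ℝ)+1) = |c| + (k:ℕ) * |c| by push_cast; ring,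
            Real.exp_add, Real.exp_nat_mul]
  have h1 : Real.sqrt (k:ℝ) + 1 ≤ 2 * 2^k := by
    have h2k : (k:ℝ) + 1 ≤ 2^k := by
      exact_mod_cast Nat.lt_two_pow_self (n := k)
    have h2k0 : (1:ℝ) ≤ 2^k := one_le_pow₀ (by norm_num)
    linarith
  have key : (Real.sqrt k + 1) * Real.exp (c * Real.sqrt k)
      ≤ (2 * 2^k) * (Real.exp |c| * (Real.exp |c|)^k) :=
    mul_le_mul h1 hexp (Real.exp_pos _).le (by positivity)
  calc pp θ k * ((Real.sqrt k + 1) * Real.exp (c * Real.sqrt k))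
      ≤ pp θ k * ((2 * 2^k) * (Real.exp |c| * (Real.exp |c|)^k)) :=
        mul_le_mul_of_nonneg_left key (pp_nonneg hθ k)
    _ = (2 * Real.exp (-θ) * Real.exp |c|) * ((2 * θ * Real.exp |c|)^k / (Nat.factorial k)) := by
        unfold pp
        rw [mul_pow, mul_pow]
        field_simp


lemma one_le_sqrt_add_one (k : ℕ) : (1:ℝ) ≤ Real.sqrt ((k:ℝ)+1) := by
  calc (1:ℝ) = Real.sqrt 1 := Real.sqrt_one.symm
    _ ≤ Real.sqrt ((k:ℝ)+1) := Real.sqrt_le_sqrt (by linarith [Nat.cast_nonneg (α := ℝ) k])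

lemma summable_pp_mul (hθ : 0 < θ) {h : ℕ → ℝ} {C c : ℝ}
    (hb : ∀ k, |h k| ≤ C * ((Real.sqrt k + 1) * Real.exp (c * Real.sqrt k))) :
    Summable (fun k => pp θ k * h k) := by
  apply Summable.of_norm
  refine Summable.of_nonneg_of_le (fun k => norm_nonneg _) (fun k => ?_)
    (((summable_aux hθ c).mul_left C))
  rw [Real.norm_eq_abs, abs_mul, abs_of_nonneg (pp_nonneg hθ k)]
  calc pp θ k * |h k| ≤ pp θ k * (C * ((Real.sqrt k + 1) * Real.exp (c * Real.sqrt k))) :=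
        mul_le_mul_of_nonneg_left (hb k) (pp_nonneg hθ k)
    _ = C * (pp θ k * ((Real.sqrt k + 1) * Real.exp (c * Real.sqrt k))) := by ring

lemma mecke (hθ : 0 < θ) (s : ℝ) (hsum : Summable (fun k => pp θ k * (Real.sqrt k * Real.exp (s * Real.sqrt k)))) :
    ∑' k, pp θ k * (Real.sqrt k * Real.exp (s * Real.sqrt k))
      = θ * ∑' j, pp θ j * (Real.exp (s * Real.sqrt ((j:ℝ)+1)) / Real.sqrt ((j:ℝ)+1)) := by
  rw [Summable.tsum_eq_zero_add hsum]
  have h0 : pp θ 0 * (Real.sqrt (0:ℕ) * Real.exp (s * Real.sqrt (0:ℕ))) = 0 := by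
    simp
  rw [h0, zero_add, ← tsum_mul_left]
  apply tsum_congr
  intro j
  have hcast : ((j+1:ℕ):ℝ) = (j:ℝ)+1 := by push_cast; ring
  have hy0 : (0:ℝ) < Real.sqrt ((j:ℝ)+1) := Real.sqrt_pos.2 (by positivity)
  have hmul : Real.sqrt ((j:ℝ)+1) * Real.sqrt ((j:ℝ)+1) = (j:ℝ)+1 :=
    Real.mul_self_sqrt (by positivity)
  calc pp θ (j+1) * (Real.sqrt ((j+1:ℕ):ℝ) * Real.exp (s * Real.sqrt ((j+1:ℕ):ℝ)))
      = θ * (pp θ j * (Real.sqrt ((j:ℝ)+1) * Real.exp (s * Real.sqrt ((j:ℝ)+1)) / ((j:ℝ)+1))) := by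
        rw [pp_succ, hcast]
        push_cast
        ring
    _ = θ * (pp θ j * (Real.exp (s * Real.sqrt ((j:ℝ)+1)) / Real.sqrt ((j:ℝ)+1))) := by
        congr 1
        congr 1
        rw [div_eq_div_iff (by positivity) (by positivity)]
        linear_combination Real.exp (s * Real.sqrt ((j:ℝ)+1)) * hmul

lemma mecke0 (hθ : 0 < θ) :
    ∑' k, pp θ k * Real.sqrt k = θ * ∑' j, pp θ j * (1 / Real.sqrt ((j:ℝ)+1)) := by
  have hsum : Summable (fun k => pp θ k * (Real.sqrt k * Real.exp (0 * Real.sqrt k))) := by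
    apply summable_pp_mul hθ (C := 1) (c := 0)
    intro k
    have h := Real.sqrt_nonneg (k:ℝ)
    rw [abs_of_nonneg (by positivity)]
    nlinarith [Real.exp_pos (0 * Real.sqrt (k:ℝ)), (by simp : Real.exp (0 * Real.sqrt (k:ℝ)) = 1)]
  have := mecke hθ 0 hsum
  simpa using this

/-- The core inequality `F'(s) ≤ (M + θ(s+e^s-1)E4) F(s)` at the series level. -/
lemma core (hθ : 0 < θ) {s : ℝ} (hs : 0 ≤ s) :
    ∑' k, pp θ k * (Real.sqrt k * Real.exp (s * Real.sqrt k))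
      ≤ ((∑' k, pp θ k * Real.sqrt k)
          + θ * (s + (Real.exp s - 1)) * (∑' k, pp θ k * (1/(4*(k:ℝ)+1))))
        * (∑' k, pp θ k * Real.exp (s * Real.sqrt k)) := by
  classical
  -- summability package
  have hb_exp : ∀ k : ℕ, |Real.exp (s * Real.sqrt k)|
      ≤ 1 * ((Real.sqrt k + 1) * Real.exp (s * Real.sqrt k)) := by
    intro k
    rw [abs_of_pos (Real.exp_pos _), one_mul]
    nlinarith [Real.exp_pos (s * Real.sqrt (k:ℝ)), Real.sqrt_nonneg (k:ℝ)]
  have hsumF : Summable (fun k => pp θ k * Real.exp (s * Real.sqrt k)) :=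
    summable_pp_mul hθ hb_exp
  have hsumG : Summable (fun k => pp θ k * (Real.sqrt k * Real.exp (s * Real.sqrt k))) := by
    apply summable_pp_mul hθ (C := 1) (c := s)
    intro k
    rw [abs_of_nonneg (by positivity), one_mul]
    nlinarith [Real.exp_pos (s * Real.sqrt (k:ℝ)), Real.sqrt_nonneg (k:ℝ)]
  have hsqmono : Monotone (fun k : ℕ => Real.exp (s * Real.sqrt k)) := by
    intro j k hjk
    apply Real.exp_le_exp.2
    exact mul_le_mul_of_nonneg_left (Real.sqrt_le_sqrt (Nat.cast_le.2 hjk)) hs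
  have hexp_nonneg : ∀ k : ℕ, 0 ≤ Real.exp (s * Real.sqrt k) := fun k => (Real.exp_pos _).le
  have hb1_anti : Antitone (fun k : ℕ => 1 / Real.sqrt ((k:ℝ)+1)) := by
    intro j k hjk
    apply one_div_le_one_div_of_le (Real.sqrt_pos.2 (by positivity))
    exact Real.sqrt_le_sqrt (by exact_mod_cast (by omega : j + 1 ≤ k + 1))
  have hb2_anti : Antitone (fun k : ℕ => 1 / (4*(k:ℝ)+1)) := by
    intro j k hjk
    apply one_div_le_one_div_of_le (by positivity)
    have : (j:ℝ) ≤ (k:ℝ) := Nat.cast_le.2 hjk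
    linarith
  have hb1_nonneg : ∀ k : ℕ, 0 ≤ 1 / Real.sqrt ((k:ℝ)+1) := fun k => by positivity
  have hb2_nonneg : ∀ k : ℕ, 0 ≤ 1 / (4*(k:ℝ)+1) := fun k => by positivity
  have hsumA : Summable (fun j => pp θ j * (Real.exp (s * Real.sqrt j) * (1 / Real.sqrt ((j:ℝ)+1)))) := by
    apply summable_pp_mul hθ (C := 1) (c := s)
    intro k
    have h1 : Real.sqrt ((k:ℝ)+1) ≥ 1 := one_le_sqrt_add_one k
    have h2 : 1 / Real.sqrt ((k:ℝ)+1) ≤ 1 := by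
      rw [div_le_one (by linarith)]; linarith
    rw [abs_of_nonneg (by positivity), one_mul]
    have h3 : Real.exp (s * Real.sqrt k) * (1 / Real.sqrt ((k:ℝ)+1)) ≤ Real.exp (s * Real.sqrt k) := by
      nlinarith [Real.exp_pos (s * Real.sqrt (k:ℝ))]
    nlinarith [Real.exp_pos (s * Real.sqrt (k:ℝ)), Real.sqrt_nonneg (k:ℝ)]
  have hsumB : Summable (fun j => pp θ j * (Real.exp (s * Real.sqrt j) * (1 / (4*(j:ℝ)+1)))) := by
    apply summable_pp_mul hθ (C := 1) (c := s)
    intro k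
    have h2 : 1 / (4*(k:ℝ)+1) ≤ 1 := by
      rw [div_le_one (by positivity)]; linarith [Nat.cast_nonneg (α := ℝ) k]
    rw [abs_of_nonneg (by positivity), one_mul]
    nlinarith [Real.exp_pos (s * Real.sqrt (k:ℝ)), Real.sqrt_nonneg (k:ℝ), hb2_nonneg k]
  have hsumb1 : Summable (fun j => pp θ j * (1 / Real.sqrt ((j:ℝ)+1))) := by
    apply summable_pp_mul hθ (C := 1) (c := 0)
    intro k
    have h1 : Real.sqrt ((k:ℝ)+1) ≥ 1 := one_le_sqrt_add_one k
    have h2 : 1 / Real.sqrt ((k:ℝ)+1) ≤ 1 := by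
      rw [div_le_one (by linarith)]; linarith
    rw [abs_of_nonneg (by positivity)]
    have : Real.exp (0 * Real.sqrt (k:ℝ)) = 1 := by simp
    nlinarith [Real.sqrt_nonneg (k:ℝ)]
  have hsumb2 : Summable (fun j => pp θ j * (1 / (4*(j:ℝ)+1))) := by
    apply summable_pp_mul hθ (C := 1) (c := 0)
    intro k
    have h2 : 1 / (4*(k:ℝ)+1) ≤ 1 := by
      rw [div_le_one (by positivity)]; linarith [Nat.cast_nonneg (α := ℝ) k]
    rw [abs_of_nonneg (by positivity)]
    have : Real.exp (0 * Real.sqrt (k:ℝ)) = 1 := by simp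
    nlinarith [Real.sqrt_nonneg (k:ℝ), hb2_nonneg k]
  -- step 1 : Mecke
  rw [mecke hθ s hsumG]
  -- step 2 : pointwise KP bound
  have hKP : ∀ j : ℕ, pp θ j * (Real.exp (s * Real.sqrt ((j:ℝ)+1)) / Real.sqrt ((j:ℝ)+1))
      ≤ pp θ j * (Real.exp (s * Real.sqrt j) * (1 / Real.sqrt ((j:ℝ)+1)))
        + (s + (Real.exp s - 1)) * (pp θ j * (Real.exp (s * Real.sqrt j) * (1 / (4*(j:ℝ)+1)))) := by
    intro j
    have := mul_le_mul_of_nonneg_left (KP j hs) (pp_nonneg hθ j)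
    calc pp θ j * (Real.exp (s * Real.sqrt ((j:ℝ)+1)) / Real.sqrt ((j:ℝ)+1))
        ≤ pp θ j * (Real.exp (s * Real.sqrt j) *
            (1 / Real.sqrt ((j:ℝ)+1) + (s + (Real.exp s - 1)) * (1/(4*(j:ℝ)+1)))) := this
      _ = pp θ j * (Real.exp (s * Real.sqrt j) * (1 / Real.sqrt ((j:ℝ)+1)))
          + (s + (Real.exp s - 1)) * (pp θ j * (Real.exp (s * Real.sqrt j) * (1 / (4*(j:ℝ)+1)))) := by
          ring
  -- summability of LHS of step-2
  have hsumL : Summable (fun j => pp θ j * (Real.exp (s * Real.sqrt ((j:ℝ)+1)) / Real.sqrt ((j:ℝ)+1))) := by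
    apply summable_pp_mul hθ (C := Real.exp s) (c := s)
    intro j
    have hy1 : (1:ℝ) ≤ Real.sqrt ((j:ℝ)+1) := one_le_sqrt_add_one j
    have hd := d_le_one j
    have hle : Real.exp (s * Real.sqrt ((j:ℝ)+1)) ≤ Real.exp s * Real.exp (s * Real.sqrt (j:ℝ)) := by
      rw [← Real.exp_add]
      apply Real.exp_le_exp.2
      nlinarith [Real.sqrt_nonneg (j:ℝ)]
    rw [abs_of_nonneg (by positivity)]
    have h1 : Real.exp (s * Real.sqrt ((j:ℝ)+1)) / Real.sqrt ((j:ℝ)+1)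
        ≤ Real.exp (s * Real.sqrt ((j:ℝ)+1)) := by
      rw [div_le_iff₀ (by linarith)]
      nlinarith [Real.exp_pos (s * Real.sqrt ((j:ℝ)+1))]
    calc Real.exp (s * Real.sqrt ((j:ℝ)+1)) / Real.sqrt ((j:ℝ)+1)
        ≤ Real.exp (s * Real.sqrt ((j:ℝ)+1)) := h1
      _ ≤ Real.exp s * Real.exp (s * Real.sqrt (j:ℝ)) := hle
      _ ≤ Real.exp s * ((Real.sqrt (j:ℝ) + 1) * Real.exp (s * Real.sqrt (j:ℝ))) := by
          have h4 : Real.exp (s * Real.sqrt (j:ℝ)) ≤ (Real.sqrt (j:ℝ)+1) * Real.exp (s * Real.sqrt (j:ℝ)) := by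
            nlinarith [Real.exp_pos (s * Real.sqrt (j:ℝ)), Real.sqrt_nonneg (j:ℝ)]
          exact mul_le_mul_of_nonneg_left h4 (Real.exp_pos s).le
  have hC0 : 0 ≤ s + (Real.exp s - 1) := by
    nlinarith [Real.one_le_exp hs]
  have hsumR : Summable (fun j => pp θ j * (Real.exp (s * Real.sqrt j) * (1 / Real.sqrt ((j:ℝ)+1)))
      + (s + (Real.exp s - 1)) * (pp θ j * (Real.exp (s * Real.sqrt j) * (1 / (4*(j:ℝ)+1))))) :=
    hsumA.add (hsumB.mul_left _)
  have step2 := Summable.tsum_le_tsum hKP hsumL hsumR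
  -- step 3 : split and apply cheb
  have hsplit : ∑' j, (pp θ j * (Real.exp (s * Real.sqrt j) * (1 / Real.sqrt ((j:ℝ)+1)))
      + (s + (Real.exp s - 1)) * (pp θ j * (Real.exp (s * Real.sqrt j) * (1 / (4*(j:ℝ)+1)))))
      = (∑' j, pp θ j * (Real.exp (s * Real.sqrt j) * (1 / Real.sqrt ((j:ℝ)+1))))
        + (s + (Real.exp s - 1)) * (∑' j, pp θ j * (Real.exp (s * Real.sqrt j) * (1 / (4*(j:ℝ)+1)))) := by
    rw [Summable.tsum_add hsumA (hsumB.mul_left _), tsum_mul_left]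
  have hchebA := cheb (pp θ) (fun k => Real.exp (s * Real.sqrt k)) (fun k => 1 / Real.sqrt ((k:ℝ)+1))
    (pp_nonneg hθ) (summable_pp hθ) (tsum_pp hθ) hsqmono hb1_anti hexp_nonneg hb1_nonneg
    hsumF hsumb1 hsumA
  have hchebB := cheb (pp θ) (fun k => Real.exp (s * Real.sqrt k)) (fun k => 1 / (4*(k:ℝ)+1))
    (pp_nonneg hθ) (summable_pp hθ) (tsum_pp hθ) hsqmono hb2_anti hexp_nonneg hb2_nonneg
    hsumF hsumb2 hsumB
  have hM : (∑' k, pp θ k * Real.sqrt k) = θ * ∑' j, pp θ j * (1 / Real.sqrt ((j:ℝ)+1)) := mecke0 hθ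
  have hF0 : 0 ≤ ∑' k, pp θ k * Real.exp (s * Real.sqrt k) :=
    tsum_nonneg (fun k => mul_nonneg (pp_nonneg hθ k) (hexp_nonneg k))
  calc θ * ∑' j, pp θ j * (Real.exp (s * Real.sqrt ((j:ℝ)+1)) / Real.sqrt ((j:ℝ)+1))
      ≤ θ * ((∑' j, pp θ j * (Real.exp (s * Real.sqrt j) * (1 / Real.sqrt ((j:ℝ)+1))))
        + (s + (Real.exp s - 1)) * (∑' j, pp θ j * (Real.exp (s * Real.sqrt j) * (1 / (4*(j:ℝ)+1))))) := by
        apply mul_le_mul_of_nonneg_left _ hθ.le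
        rw [← hsplit]
        exact step2
    _ ≤ θ * (((∑' k, pp θ k * Real.exp (s * Real.sqrt k)) * (∑' j, pp θ j * (1 / Real.sqrt ((j:ℝ)+1))))
        + (s + (Real.exp s - 1)) * ((∑' k, pp θ k * Real.exp (s * Real.sqrt k)) * (∑' j, pp θ j * (1 / (4*(j:ℝ)+1))))) := by
        apply mul_le_mul_of_nonneg_left _ hθ.le
        exact add_le_add hchebA (mul_le_mul_of_nonneg_left hchebB hC0)
    _ = ((∑' k, pp θ k * Real.sqrt k)
          + θ * (s + (Real.exp s - 1)) * (∑' k, pp θ k * (1/(4*(k:ℝ)+1))))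
        * (∑' k, pp θ k * Real.exp (s * Real.sqrt k)) := by
        rw [hM]
        ring

end Sums

section Meas
variable {Ω : Type*} [MeasurableSpace Ω] (μ : Measure Ω) [IsProbabilityMeasure μ]
  {θ : ℝ} (hθ : 0 < θ) (X : Ω → ℕ)
  (hX : ∀ k : ℕ, μ {a | X a = k} = ENNReal.ofReal (pp θ k))

include hθ hX

lemma tsum_ofReal_pp : ∑' k, ENNReal.ofReal (pp θ k) = 1 := by
  rw [← ENNReal.ofReal_tsum_of_nonneg (pp_nonneg hθ) (summable_pp hθ), tsum_pp hθ]
  simp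

lemma fiber_nullMeasurable (k : ℕ) : NullMeasurableSet {a | X a = k} μ := by
  set A := {a | X a = k} with hA
  -- μ Aᶜ ≤ 1 - ofReal (pp θ k)
  have hcomp : Aᶜ = ⋃ j, (if j = k then (∅ : Set Ω) else {a | X a = j}) := by
    ext a
    simp only [Set.mem_compl_iff, hA, Set.mem_setOf_eq, Set.mem_iUnion]
    constructor
    · intro h
      exact ⟨X a, by simp [if_neg h]⟩
    · rintro ⟨j, hj⟩
      intro hXa
      by_cases hjk : j = k
      · simp [hjk] at hj
      · simp [if_neg hjk] at hj
        rw [hj] at hXa; exact hjk hXa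
  have hAc : μ Aᶜ ≤ 1 - ENNReal.ofReal (pp θ k) := by
    rw [hcomp]
    refine (measure_iUnion_le _).trans ?_
    have hev : ∀ j, μ (if j = k then (∅ : Set Ω) else {a | X a = j})
        = (if j = k then 0 else ENNReal.ofReal (pp θ j)) := by
      intro j
      by_cases hjk : j = k <;> simp [hjk, hX]
    calc ∑' j, μ (if j = k then (∅:Set Ω) else {a | X a = j})
        = ∑' j, (if j = k then 0 else ENNReal.ofReal (pp θ j)) := tsum_congr hev
      _ ≤ 1 - ENNReal.ofReal (pp θ k) := by
          have h0 := ENNReal.tsum_eq_add_tsum_ite (f := fun j => ENNReal.ofReal (pp θ j)) k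
          rw [tsum_ofReal_pp μ hθ X hX] at h0
          refine le_of_eq (ENNReal.eq_sub_of_add_eq (by simp) ?_)
          rw [add_comm]
          convert h0.symm using 3
          congr!
  have hble : ENNReal.ofReal (pp θ k) ≤ 1 := by
    rw [← tsum_ofReal_pp μ hθ X hX]
    exact ENNReal.le_tsum k
  have hge : (1:ENNReal) ≤ μ A + μ Aᶜ := by
    calc (1:ENNReal) = μ Set.univ := (measure_univ).symm
      _ = μ (A ∪ Aᶜ) := by rw [Set.union_compl_self]
      _ ≤ μ A + μ Aᶜ := measure_union_le _ _
  have hle' : μ A + μ Aᶜ ≤ 1 := by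
    rw [hX k]
    calc ENNReal.ofReal (pp θ k) + μ Aᶜ
        ≤ ENNReal.ofReal (pp θ k) + (1 - ENNReal.ofReal (pp θ k)) := add_le_add_right hAc _
      _ = 1 := by rw [add_comm]; exact tsub_add_cancel_of_le hble
  have hApAc : μ A + μ Aᶜ = 1 := le_antisymm hle' hge
  -- measurable hulls
  obtain ⟨B, hAB, hBmeas, hBA⟩ := exists_measurable_superset μ A
  obtain ⟨C, hAcC, hCmeas, hCA⟩ := exists_measurable_superset μ Aᶜ
  have hCcA : Cᶜ ⊆ A := by
    intro a ha
    by_contra h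
    exact ha (hAcC h)
  have hCcB : Cᶜ ⊆ B := hCcA.trans hAB
  have hμCc : μ Cᶜ = 1 - μ Aᶜ := by
    rw [measure_compl hCmeas (measure_ne_top μ C), hCA, measure_univ]
  -- μ (B ∩ C) = 0
  have key : μ (B ∩ C) = 0 := by
    have h1 : μ (B ∩ C) + μ (B \ C) = μ B := measure_inter_add_diff B hCmeas
    have h2 : μ Cᶜ ≤ μ (B \ C) := by
      apply measure_mono
      intro a ha
      exact ⟨hCcB ha, ha⟩
    have h3 : μ A ≤ μ Cᶜ := by
      rw [hμCc]
      have hfin : μ Aᶜ ≠ ⊤ := measure_ne_top μ _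
      rw [← hApAc]
      rw [ENNReal.add_sub_cancel_right hfin]
    have h4 : μ (B ∩ C) + μ A ≤ μ A := by
      calc μ (B ∩ C) + μ A ≤ μ (B ∩ C) + μ (B \ C) := by
            exact add_le_add_right (h3.trans h2) _
        _ = μ B := h1
        _ = μ A := hBA
    have := (ENNReal.add_le_add_iff_right (measure_ne_top μ A)).1
      (by simpa using h4 : μ (B ∩ C) + μ A ≤ 0 + μ A)
    simpa using this
  apply NullMeasurableSet.congr (hCmeas.compl.nullMeasurableSet) (μ := μ)
  rw [Filter.eventuallyEq_set]
  rw [MeasureTheory.ae_iff]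
  apply measure_mono_null ?_ key
  intro a ha
  simp only [Set.mem_setOf_eq] at ha
  push_neg at ha
  rcases ha with ⟨haCc, haA⟩ | ⟨haC, haA⟩
  · exact absurd (hCcA haCc) haA
  · exact ⟨hAB haA, by simpa using haC⟩

lemma integral_comp (h : ℕ → ℝ)
    (hs : Summable (fun k => pp θ k * |h k|)) :
    Integrable (fun a => h (X a)) μ ∧ ∫ a, h (X a) ∂μ = ∑' k, pp θ k * h k := by
  classical
  set A : ℕ → Set Ω := fun k => {a | X a = k} with hAdef
  have hnm : ∀ k, NullMeasurableSet (A k) μ := fun k => fiber_nullMeasurable μ hθ X hX k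
  set t : ℕ → Set Ω := fun k => toMeasurable μ (A k) with htdef
  have htmeas : ∀ k, MeasurableSet (t k) := fun k => measurableSet_toMeasurable μ (A k)
  have htae : ∀ k, t k =ᵐ[μ] A k := fun k => (hnm k).toMeasurable_ae_eq
  have hind_ae : ∀ (g : ℕ → ℝ) (k : ℕ),
      (fun a => (A k).indicator (fun _ => g k) a) =ᵐ[μ] (fun a => (t k).indicator (fun _ => g k) a) := by
    intro g k
    filter_upwards [Filter.eventuallyEq_set.1 (htae k)] with a ha
    by_cases h1 : a ∈ A k
    · rw [Set.indicator_of_mem h1, Set.indicator_of_mem (ha.2 h1)]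
    · rw [Set.indicator_of_notMem h1, Set.indicator_of_notMem (fun hc => h1 (ha.1 hc))]
  have hAESM_ind : ∀ (g : ℕ → ℝ) (k : ℕ),
      AEStronglyMeasurable (fun a => (A k).indicator (fun _ => g k) a) μ := by
    intro g k
    exact (stronglyMeasurable_const.indicator (htmeas k)).aestronglyMeasurable.congr
      (hind_ae g k).symm
  -- pointwise identity
  have hpt : ∀ a, (∑' k, (A k).indicator (fun _ => h k) a) = h (X a) := by
    intro a
    rw [tsum_eq_single (X a)]
    · rw [Set.indicator_of_mem (by simp [hAdef])]
    · intro k hk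
      apply Set.indicator_of_notMem
      simp only [hAdef, Set.mem_setOf_eq]
      exact fun hc => hk (hc ▸ rfl)
  -- AEStronglyMeasurable of h ∘ X
  have hAESM : AEStronglyMeasurable (fun a => h (X a)) μ := by
    apply aestronglyMeasurable_of_tendsto_ae (u := atTop)
      (f := fun n a => ∑ k ∈ Finset.range n, (t k).indicator (fun _ => h k) a)
    · intro n
      exact (Finset.stronglyMeasurable_fun_sum (Finset.range n)
        (fun k _ => stronglyMeasurable_const.indicator (htmeas k))).aestronglyMeasurable
    · have hae_all : ∀ᵐ a ∂μ, ∀ k, (a ∈ t k ↔ a ∈ A k) := by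
        rw [MeasureTheory.ae_all_iff]
        exact fun k => Filter.eventuallyEq_set.1 (htae k)
      filter_upwards [hae_all] with a ha
      have hev : ∀ n ≥ X a + 1,
          (∑ k ∈ Finset.range n, (t k).indicator (fun _ => h k) a) = h (X a) := by
        intro n hn
        have : ∀ k ∈ Finset.range n, (t k).indicator (fun _ => h k) a
            = if k = X a then h (X a) else 0 := by
          intro k _
          by_cases hk : k = X a
          · subst hk
            rw [if_pos rfl, Set.indicator_of_mem ((ha (X a)).2 (by simp [hAdef]))]
          · rw [if_neg hk, Set.indicator_of_notMem]
            intro hc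
            exact hk ((by simpa [hAdef] using (ha k).1 hc : X a = k)).symm
        rw [Finset.sum_congr rfl this,
          Finset.sum_eq_single (X a) (fun b _ hb => if_neg hb)
            (fun hXa => absurd (Finset.mem_range.2 (Nat.lt_of_succ_le hn)) hXa)]
        simp
      exact tendsto_atTop_of_eventually_const hev
  -- lintegral computation
  have hlint : ∫⁻ a, ‖h (X a)‖₊ ∂μ = ENNReal.ofReal (∑' k, pp θ k * |h k|) := by
    have hpt' : ∀ a, (‖h (X a)‖₊ : ENNReal) = ∑' k, (A k).indicator (fun _ => (‖h k‖₊ : ENNReal)) a := by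
      intro a
      rw [tsum_eq_single (X a)]
      · rw [Set.indicator_of_mem (by simp [hAdef])]
      · intro k hk
        apply Set.indicator_of_notMem
        simp only [hAdef, Set.mem_setOf_eq]
        exact fun hc => hk (hc ▸ rfl)
    calc ∫⁻ a, ‖h (X a)‖₊ ∂μ
        = ∫⁻ a, ∑' k, (A k).indicator (fun _ => (‖h k‖₊ : ENNReal)) a ∂μ := by
          congr 1; funext a; exact hpt' a
      _ = ∑' k, ∫⁻ a, (A k).indicator (fun _ => (‖h k‖₊ : ENNReal)) a ∂μ := by
          apply lintegral_tsum
          intro k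
          exact (aemeasurable_const.indicator (htmeas k)).congr
            (by filter_upwards [Filter.eventuallyEq_set.1 (htae k)] with a ha
                by_cases h1 : a ∈ A k
                · rw [Set.indicator_of_mem (ha.2 h1), Set.indicator_of_mem h1]
                · rw [Set.indicator_of_notMem (fun hc => h1 (ha.1 hc)), Set.indicator_of_notMem h1])
      _ = ∑' k, (‖h k‖₊ : ENNReal) * μ (A k) := by
          congr 1; funext k
          rw [lintegral_indicator₀ (hnm k), setLIntegral_const]
      _ = ∑' k, ENNReal.ofReal (pp θ k * |h k|) := by
          congr 1; funext k
          rw [hX k, ← enorm_eq_nnnorm, Real.enorm_eq_ofReal_abs, ← ENNReal.ofReal_mul (abs_nonneg _)]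
          congr 1
          ring
      _ = ENNReal.ofReal (∑' k, pp θ k * |h k|) := by
          rw [ENNReal.ofReal_tsum_of_nonneg (fun k => mul_nonneg (pp_nonneg hθ k) (abs_nonneg _)) hs]
  have hint : Integrable (fun a => h (X a)) μ := by
    refine ⟨hAESM, ?_⟩
    change ∫⁻ a, (‖h (X a)‖₊ : ENNReal) ∂μ < ⊤; rw [hlint]
    exact ENNReal.ofReal_lt_top
  refine ⟨hint, ?_⟩
  -- value of the integral
  have hsum_lint : ∑' k, ∫⁻ a, ‖(A k).indicator (fun _ => h k) a‖₊ ∂μ ≠ ⊤ := by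
    have : ∀ k, ∫⁻ a, ‖(A k).indicator (fun _ => h k) a‖₊ ∂μ = ENNReal.ofReal (pp θ k * |h k|) := by
      intro k
      have : ∀ a, (‖(A k).indicator (fun _ => h k) a‖₊ : ENNReal)
          = (A k).indicator (fun _ => (‖h k‖₊ : ENNReal)) a := by
        intro a
        by_cases h1 : a ∈ A k
        · rw [Set.indicator_of_mem h1, Set.indicator_of_mem h1]
        · rw [Set.indicator_of_notMem h1, Set.indicator_of_notMem h1]; simp
      calc ∫⁻ a, ‖(A k).indicator (fun _ => h k) a‖₊ ∂μ
          = ∫⁻ a, (A k).indicator (fun _ => (‖h k‖₊ : ENNReal)) a ∂μ := by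
            congr 1; funext a; exact this a
        _ = (‖h k‖₊ : ENNReal) * μ (A k) := by
            rw [lintegral_indicator₀ (hnm k), setLIntegral_const]
        _ = ENNReal.ofReal (pp θ k * |h k|) := by
            rw [hX k, ← enorm_eq_nnnorm, Real.enorm_eq_ofReal_abs, ← ENNReal.ofReal_mul (abs_nonneg _)]
            congr 1
            ring
    rw [tsum_congr this, ← ENNReal.ofReal_tsum_of_nonneg (fun k => mul_nonneg (pp_nonneg hθ k) (abs_nonneg _)) hs]
    exact ENNReal.ofReal_ne_top
  calc ∫ a, h (X a) ∂μ
      = ∫ a, (∑' k, (A k).indicator (fun _ => h k) a) ∂μ := by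
        congr 1; funext a; exact (hpt a).symm
    _ = ∑' k, ∫ a, (A k).indicator (fun _ => h k) a ∂μ :=
        integral_tsum (fun k => hAESM_ind h k) hsum_lint
    _ = ∑' k, pp θ k * h k := by
        congr 1; funext k
        calc ∫ a, (A k).indicator (fun _ => h k) a ∂μ
            = ∫ a, (t k).indicator (fun _ => h k) a ∂μ := integral_congr_ae (hind_ae h k)
          _ = (μ (t k)).toReal • h k := integral_indicator_const (h k) (htmeas k)
          _ = pp θ k * h k := by
              rw [measure_congr (htae k), hX k, ENNReal.toReal_ofReal (pp_nonneg hθ k)]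
              simp [smul_eq_mul]

end Meas

/-- Sub-exponential bound for `√X - E√X` when `X ~ Poisson(θ)`: for `λ ∈ (0, 1/2)`,
`log E[exp(λ(√X - E√X))] ≤ λ(e^λ - 1) θ E[1/(4X+1)] ≤ λ(e^λ - 1)`. -/
theorem poisson_sqrt_subexponential
    {Ω : Type*} [MeasurableSpace Ω] (μ : Measure Ω) [IsProbabilityMeasure μ]
    (θ : ℝ) (hθ : 0 < θ)
    (X : Ω → ℕ)
    (hX : ∀ k : ℕ, μ {a | X a = k}
        = ENNReal.ofReal (Real.exp (-θ) * θ ^ k / (Nat.factorial k)))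
    (lam : ℝ) (hlam : lam ∈ Set.Ioo (0:ℝ) (1/2)) :
    Real.log (∫ a, Real.exp (lam * (Real.sqrt (X a) - ∫ b, Real.sqrt (X b) ∂μ)) ∂μ)
      ≤ lam * (Real.exp lam - 1) * θ * ∫ a, 1 / (4 * (X a : ℝ) + 1) ∂μ
    ∧ lam * (Real.exp lam - 1) * θ * (∫ a, 1 / (4 * (X a : ℝ) + 1) ∂μ)
        ≤ lam * (Real.exp lam - 1) := by
  obtain ⟨hlam0, hlam2⟩ := hlam
  have hX' : ∀ k : ℕ, μ {a | X a = k} = ENNReal.ofReal (pp θ k) := hX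
  -- abbreviations
  set M : ℝ := ∫ b, Real.sqrt (X b) ∂μ with hMdef
  set E4 : ℝ := ∫ a, 1 / (4 * (X a : ℝ) + 1) ∂μ with hE4def
  -- summability facts
  have hexp1 : ∀ k : ℕ, (1:ℝ) ≤ Real.exp (0 * Real.sqrt k) := by
    intro k; simp
  have hsqb : ∀ s : ℝ, ∀ k : ℕ, |Real.exp (s * Real.sqrt k)|
      ≤ 1 * ((Real.sqrt k + 1) * Real.exp (s * Real.sqrt k)) := by
    intro s k
    rw [abs_of_pos (Real.exp_pos _), one_mul]
    nlinarith [Real.exp_pos (s * Real.sqrt (k:ℝ)), Real.sqrt_nonneg (k:ℝ)]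
  have hsGb : ∀ s : ℝ, ∀ k : ℕ, |Real.sqrt k * Real.exp (s * Real.sqrt k)|
      ≤ 1 * ((Real.sqrt k + 1) * Real.exp (s * Real.sqrt k)) := by
    intro s k
    rw [abs_of_nonneg (by positivity), one_mul]
    nlinarith [Real.exp_pos (s * Real.sqrt (k:ℝ)), Real.sqrt_nonneg (k:ℝ)]
  -- integral identities
  have hIm := integral_comp μ hθ X hX' (fun k => Real.sqrt k)
    (summable_pp_mul hθ (C := 1) (c := 0) (fun k => by
      rw [abs_abs]
      have := hexp1 k
      rw [abs_of_nonneg (Real.sqrt_nonneg _)]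
      nlinarith [Real.sqrt_nonneg (k:ℝ)]))
  have hIE4 := integral_comp μ hθ X hX' (fun k => 1 / (4 * (k:ℝ) + 1))
    (summable_pp_mul hθ (C := 1) (c := 0) (fun k => by
      rw [abs_abs]
      have h2 : 1 / (4*(k:ℝ)+1) ≤ 1 := by
        rw [div_le_one (by positivity)]; linarith [Nat.cast_nonneg (α := ℝ) k]
      have h0 : (0:ℝ) ≤ 1 / (4*(k:ℝ)+1) := by positivity
      rw [abs_of_nonneg h0]
      have := hexp1 k
      nlinarith [Real.sqrt_nonneg (k:ℝ)]))
  have hIF : ∀ s : ℝ, Integrable (fun a => Real.exp (s * Real.sqrt (X a))) μ ∧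
      ∫ a, Real.exp (s * Real.sqrt (X a)) ∂μ = ∑' k, pp θ k * Real.exp (s * Real.sqrt k) :=
    fun s => integral_comp μ hθ X hX' (fun k => Real.exp (s * Real.sqrt k))
      (summable_pp_mul hθ (C := 1) (c := s) (fun k => by rw [abs_abs]; exact hsqb s k))
  have hIG : ∀ s : ℝ, Integrable (fun a => Real.sqrt (X a) * Real.exp (s * Real.sqrt (X a))) μ ∧
      ∫ a, Real.sqrt (X a) * Real.exp (s * Real.sqrt (X a)) ∂μ
        = ∑' k, pp θ k * (Real.sqrt k * Real.exp (s * Real.sqrt k)) :=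
    fun s => integral_comp μ hθ X hX' (fun k => Real.sqrt k * Real.exp (s * Real.sqrt k))
      (summable_pp_mul hθ (C := 1) (c := s) (fun k => by rw [abs_abs]; exact hsGb s k))
  have hIB := integral_comp μ hθ X hX'
    (fun k => (Real.sqrt k + 1) * Real.exp ((3/2) * Real.sqrt k))
    (summable_pp_mul hθ (C := 1) (c := 3/2) (fun k => by
      rw [abs_abs, abs_of_nonneg (by positivity), one_mul]))
  set F : ℝ → ℝ := fun s => ∫ a, Real.exp (s * Real.sqrt (X a)) ∂μ with hFdef
  set G : ℝ → ℝ := fun s => ∫ a, Real.sqrt (X a) * Real.exp (s * Real.sqrt (X a)) ∂μ with hGdef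
  -- derivative of F
  have hFderiv : ∀ s₀ ∈ Set.Icc (0:ℝ) lam, HasDerivAt F (G s₀) s₀ := by
    intro s₀ hs₀
    have := hasDerivAt_integral_of_dominated_loc_of_deriv_le (μ := μ) (𝕜 := ℝ)
      (F := fun s a => Real.exp (s * Real.sqrt (X a)))
      (F' := fun s a => Real.sqrt (X a) * Real.exp (s * Real.sqrt (X a)))
      (x₀ := s₀)
      (bound := fun a => (Real.sqrt (X a) + 1) * Real.exp ((3/2) * Real.sqrt (X a)))
      (s := Metric.ball s₀ 1) (Metric.ball_mem_nhds s₀ one_pos)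
      (Filter.Eventually.of_forall (fun x => (hIF x).1.aestronglyMeasurable))
      (hIF s₀).1
      (hIG s₀).1.aestronglyMeasurable
      (Filter.Eventually.of_forall (fun a => ?_))
      hIB.1
      (Filter.Eventually.of_forall (fun a => ?_))
    · exact this.2
    · -- bound
      intro x hx
      have hxle : x ≤ 3/2 := by
        have := Metric.mem_ball.1 hx
        rw [Real.dist_eq] at this
        have h1 := abs_lt.1 this
        have := hs₀.2
        linarith
      have hsq0 : (0:ℝ) ≤ Real.sqrt (X a) := Real.sqrt_nonneg _
      rw [Real.norm_eq_abs, abs_of_nonneg (by positivity)]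
      have hexple : Real.exp (x * Real.sqrt (X a)) ≤ Real.exp ((3/2) * Real.sqrt (X a)) :=
        Real.exp_le_exp.2 (mul_le_mul_of_nonneg_right hxle hsq0)
      nlinarith [Real.exp_pos ((3/2) * Real.sqrt (X a)),
        mul_le_mul_of_nonneg_left hexple hsq0]
    · -- differentiability
      intro x _
      have h1 : HasDerivAt (fun y : ℝ => y * Real.sqrt (X a)) (Real.sqrt (X a)) x := by
        simpa using (hasDerivAt_id x).mul_const (Real.sqrt (X a))
      have := (Real.hasDerivAt_exp (x * Real.sqrt (X a))).comp x h1
      simpa [mul_comm, Function.comp_def] using this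
  -- core inequality in integral form
  have hcore : ∀ s ∈ Set.Icc (0:ℝ) lam,
      G s ≤ (M + θ * (s + (Real.exp s - 1)) * E4) * F s := by
    intro s hs
    rw [hGdef, hFdef]
    simp only []
    rw [(hIG s).2, (hIF s).2, hMdef, hE4def, hIm.2, hIE4.2]
    exact core hθ hs.1
  -- the Gronwall-type argument
  set u : ℝ → ℝ := fun s => s * M + θ * E4 * (Real.exp s - 1 - s + s^2/2) with hudef
  have hu' : ∀ s : ℝ, HasDerivAt u (M + θ * E4 * (Real.exp s - 1 + s)) s := by
    intro s
    have h1 : HasDerivAt (fun y : ℝ => y * M) M s := by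
      simpa using (hasDerivAt_id s).mul_const M
    have h2 : HasDerivAt (fun y : ℝ => Real.exp y - 1 - y + y^2/2) (Real.exp s - 1 + s) s := by
      have ha : HasDerivAt (fun y : ℝ => y ^ 2 / 2) s s := by
        simpa using (hasDerivAt_pow 2 s).div_const 2
      have := (((Real.hasDerivAt_exp s).sub_const 1).sub (hasDerivAt_id s)).add ha
      exact this.congr_deriv (by ring)
    have := h1.add ((h2.const_mul (θ * E4)))
    exact this.congr_deriv (by ring)
  set ψ : ℝ → ℝ := fun s => F s * Real.exp (-(u s)) with hψdef
  have hψderiv : ∀ s ∈ Set.Icc (0:ℝ) lam, HasDerivAt ψ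
      ((G s - (M + θ * E4 * (Real.exp s - 1 + s)) * F s) * Real.exp (-(u s))) s := by
    intro s hs
    have h1 : HasDerivAt (fun y => Real.exp (-(u y)))
        (-(M + θ * E4 * (Real.exp s - 1 + s)) * Real.exp (-(u s))) s := by
      have := (Real.hasDerivAt_exp (-(u s))).comp s ((hu' s).neg)
      simpa [mul_comm, Function.comp_def] using this
    have := (hFderiv s hs).mul h1
    exact this.congr_deriv (by ring)
  have hψ0 : ψ 0 = 1 := by
    rw [hψdef]
    simp only []
    have hu0 : u 0 = 0 := by simp [hudef]
    have hF0 : F 0 = 1 := by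
      rw [hFdef]
      simp only [zero_mul, Real.exp_zero]
      simp [measure_univ]
    rw [hu0, hF0]
    simp
  have hψmono : ψ lam ≤ ψ 0 := by
    have := mono_aux (f := fun s => -ψ s)
      (f' := fun s => -((G s - (M + θ * E4 * (Real.exp s - 1 + s)) * F s) * Real.exp (-(u s))))
      hlam0.le
      (fun x hx => (hψderiv x hx).neg)
      (fun x hx => by
        have h1 := hcore x hx
        have h2 : 0 < Real.exp (-(u x)) := Real.exp_pos _
        have h3 : (M + θ * (x + (Real.exp x - 1)) * E4) = (M + θ * E4 * (Real.exp x - 1 + x)) := by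
          ring
        rw [h3] at h1
        have h4 : 0 ≤ ((M + θ * E4 * (Real.exp x - 1 + x)) * F x - G x) * Real.exp (-(u x)) :=
          mul_nonneg (by linarith) h2.le
        have h5 : -((G x - (M + θ * E4 * (Real.exp x - 1 + x)) * F x) * Real.exp (-(u x)))
            = ((M + θ * E4 * (Real.exp x - 1 + x)) * F x - G x) * Real.exp (-(u x)) := by ring
        rw [h5]
        exact h4)
    have this' : -ψ 0 ≤ -ψ lam := this
    linarith
  -- F lam ≤ exp (u lam)
  have hFlam : F lam ≤ Real.exp (u lam) := by
    have h1 : F lam * Real.exp (-(u lam)) ≤ 1 := by rw [← hψ0]; exact hψmono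
    have h2 : 0 < Real.exp (-(u lam)) := Real.exp_pos _
    rw [show Real.exp (u lam) = 1 / Real.exp (-(u lam)) by
      rw [eq_div_iff (ne_of_gt h2), ← Real.exp_add]; simp]
    rw [le_div_iff₀ h2]
    exact h1
  -- positivity of F lam
  have hFpos : 0 < F lam := by
    rw [hFdef]
    simp only []
    rw [(hIF lam).2]
    have hsum := summable_pp_mul hθ (C := 1) (c := lam) (hsqb lam)
    have hterm : 0 < pp θ 0 * Real.exp (lam * Real.sqrt (0:ℕ)) := by
      have : 0 < pp θ 0 := by unfold pp; positivity
      positivity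
    calc (0:ℝ) < pp θ 0 * Real.exp (lam * Real.sqrt (0:ℕ)) := hterm
      _ ≤ ∑' k, pp θ k * Real.exp (lam * Real.sqrt k) :=
        Summable.le_tsum hsum 0 (fun j _ => mul_nonneg (pp_nonneg hθ j) (Real.exp_pos _).le)
  -- E4 ≥ 0
  have hE4nn : 0 ≤ E4 := by
    rw [hE4def, hIE4.2]
    exact tsum_nonneg (fun k => mul_nonneg (pp_nonneg hθ k) (by positivity))
  -- the integral in the goal
  have hgoal_int : ∫ a, Real.exp (lam * (Real.sqrt (X a) - M)) ∂μ
      = F lam * Real.exp (-(lam * M)) := by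
    rw [hFdef]
    simp only []
    rw [← integral_mul_const]
    congr 1
    funext a
    rw [← Real.exp_add]
    congr 1
    ring
  -- first conjunct
  constructor
  · rw [hgoal_int]
    have hpos : 0 < F lam * Real.exp (-(lam * M)) := by positivity
    rw [Real.log_le_iff_le_exp hpos]
    calc F lam * Real.exp (-(lam * M))
        ≤ Real.exp (u lam) * Real.exp (-(lam * M)) :=
          mul_le_mul_of_nonneg_right hFlam (Real.exp_pos _).le
      _ = Real.exp (θ * E4 * (Real.exp lam - 1 - lam + lam^2/2)) := by
          rw [← Real.exp_add]
          congr 1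
          rw [hudef]
          ring
      _ ≤ Real.exp (lam * (Real.exp lam - 1) * θ * E4) := by
          apply Real.exp_le_exp.2
          have := scalar_final hlam0.le
          have h4 : θ * E4 * (Real.exp lam - 1 - lam + lam^2/2) ≤ θ * E4 * (lam * (Real.exp lam - 1)) :=
            mul_le_mul_of_nonneg_left this (by positivity)
          nlinarith
  · -- second conjunct
    have hθE4 : θ * E4 ≤ 1 := by
      rw [hE4def, hIE4.2]
      have hsum2 : Summable (fun k => pp θ k * (1/((k:ℝ)+1))) := by
        apply summable_pp_mul hθ (C := 1) (c := 0)
        intro k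
        have h2 : 1/((k:ℝ)+1) ≤ 1 := by
          rw [div_le_one (by positivity)]; linarith [Nat.cast_nonneg (α := ℝ) k]
        rw [abs_of_nonneg (by positivity)]
        have := hexp1 k
        nlinarith [Real.sqrt_nonneg (k:ℝ)]
      have hsum1 : Summable (fun k => pp θ k * (1/(4*(k:ℝ)+1))) := by
        apply summable_pp_mul hθ (C := 1) (c := 0)
        intro k
        have h2 : 1/(4*(k:ℝ)+1) ≤ 1 := by
          rw [div_le_one (by positivity)]; linarith [Nat.cast_nonneg (α := ℝ) k]
        rw [abs_of_nonneg (by positivity)]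
        have := hexp1 k
        nlinarith [Real.sqrt_nonneg (k:ℝ)]
      have step1 : (∑' k, pp θ k * (1/(4*(k:ℝ)+1))) ≤ ∑' k, pp θ k * (1/((k:ℝ)+1)) := by
        apply Summable.tsum_le_tsum _ hsum1 hsum2
        intro k
        apply mul_le_mul_of_nonneg_left _ (pp_nonneg hθ k)
        apply one_div_le_one_div_of_le (by positivity)
        linarith [Nat.cast_nonneg (α := ℝ) k]
      have step2 : θ * ∑' k, pp θ k * (1/((k:ℝ)+1)) = ∑' k, pp θ (k+1) := by
        rw [← tsum_mul_left]
        apply tsum_congr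
        intro k
        rw [pp_succ]
        push_cast
        ring
      have step3 : (∑' k, pp θ (k+1)) = 1 - pp θ 0 := by
        have := Summable.tsum_eq_zero_add (summable_pp hθ)
        rw [tsum_pp hθ] at this
        linarith
      have hpp0 : 0 < pp θ 0 := by unfold pp; positivity
      calc θ * ∑' k, pp θ k * (1/(4*(k:ℝ)+1))
          ≤ θ * ∑' k, pp θ k * (1/((k:ℝ)+1)) := mul_le_mul_of_nonneg_left step1 hθ.le
        _ = 1 - pp θ 0 := by rw [step2, step3]
        _ ≤ 1 := by linarith
    have hfac : 0 ≤ lam * (Real.exp lam - 1) := by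
      nlinarith [Real.one_le_exp hlam0.le]
    calc lam * (Real.exp lam - 1) * θ * E4 = (lam * (Real.exp lam - 1)) * (θ * E4) := by ring
      _ ≤ (lam * (Real.exp lam - 1)) * 1 := mul_le_mul_of_nonneg_left hθE4 hfac
      _ = lam * (Real.exp lam - 1) := by ring
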